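/- Let H be a Hilbert space, C : dom(C) ⊆ H → H quasi-m-accretive, α ∈ L(H) with α[dom(C)] ⊆ dom(C) and [α,C] continuous. Then (αC)* = cl(α*C*) + cl([C*, α*]). -/

import Mathlib

open Filter Topology

noncomputable section

variable {H : Type*} [NormedAddCommGroup H] [InnerProductSpace ℝ H]

/-- `Rη` is the resolvent `(1 + η C)⁻¹` of the (generally unbounded) operator `C`. -/
def IsResolvent (C : H →ₗ.[ℝ] H) (η : ℝ) (Rη : H →L[ℝ] H) : Prop :=
  (∀ x : C.domain, Rη ((x : H) + η • C x) = x) ∧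
  (∀ y : H, ∃ h : Rη y ∈ C.domain, Rη y + η • C ⟨Rη y, h⟩ = y)

/-- `C` is quasi-m-accretive, witnessed by the resolvent family `Res` on `[0, η₀]`. -/
def IsQuasiMAccretiveWith (C : H →ₗ.[ℝ] H) (Res : ℝ → H →L[ℝ] H) (η₀ M : ℝ) : Prop :=
  0 < η₀ ∧ ∀ η ∈ Set.Icc (0 : ℝ) η₀, IsResolvent C η (Res η) ∧ ‖Res η‖ ≤ M

/-- Composition `L ∘ C` of a bounded operator with an unbounded one, domain `dom C`. -/
def lcompPMap (L : H →L[ℝ] H) (C : H →ₗ.[ℝ] H) : H →ₗ.[ℝ] H :=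
  ⟨C.domain, (L : H →ₗ[ℝ] H).comp C.toFun⟩

section Aux

open RealInnerProductSpace

theorem lcompPMap_apply (L : H →L[ℝ] H) (C : H →ₗ.[ℝ] H) (x : (lcompPMap L C).domain) :
    lcompPMap L C x = L (C ⟨(x : H), x.2⟩) := rfl

variable [CompleteSpace H]

/-- graph of the adjoint, characterized. -/
theorem mem_adjoint_graph_iff' (f : H →ₗ.[ℝ] H) (hf : Dense (f.domain : Set H)) (p : H × H) :
    p ∈ f.adjoint.graph ↔ ∀ x : f.domain, ⟪p.2, (x : H)⟫ = ⟪p.1, f x⟫ := by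
  constructor
  · intro hp
    rw [LinearPMap.mem_graph_iff] at hp
    obtain ⟨y, hy1, hy2⟩ := hp
    intro x
    rw [← hy2, ← hy1]
    exact (LinearPMap.adjoint_isFormalAdjoint hf) y x
  · intro h
    have hmem : p.1 ∈ f.adjoint.domain :=
      LinearPMap.mem_adjoint_domain_of_exists _ ⟨p.2, fun x => h x⟩
    have heq : f.adjoint ⟨p.1, hmem⟩ = p.2 :=
      LinearPMap.adjoint_apply_eq hf _ fun x => h x
    have := f.adjoint.mem_graph ⟨p.1, hmem⟩
    rwa [heq] at this

theorem adjoint_isClosed' (f : H →ₗ.[ℝ] H) (hf : Dense (f.domain : Set H)) :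
    f.adjoint.IsClosed := by
  have hset : (f.adjoint.graph : Set (H × H)) =
      ⋂ x : f.domain, {p : H × H | ⟪p.2, (x : H)⟫ = ⟪p.1, f x⟫} := by
    ext p
    simp only [Set.mem_iInter, Set.mem_setOf_eq, SetLike.mem_coe,
      mem_adjoint_graph_iff' f hf]
  rw [LinearPMap.IsClosed, hset]
  exact isClosed_iInter fun x => isClosed_eq
    (Continuous.inner continuous_snd continuous_const)
    (Continuous.inner continuous_fst continuous_const)

omit [CompleteSpace H] in
/-- A closed pmap plus an everywhere-defined bounded map is closed. -/
theorem isClosed_add_toPMap (f : H →ₗ.[ℝ] H) (hf : f.IsClosed) (g : H →L[ℝ] H) :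
    (f + (g : H →ₗ[ℝ] H).toPMap ⊤).IsClosed := by
  have hset : ((f + (g : H →ₗ[ℝ] H).toPMap ⊤).graph : Set (H × H)) =
      (fun p : H × H => (p.1, p.2 - g p.1)) ⁻¹' (f.graph : Set (H × H)) := by
    ext p
    simp only [Set.mem_preimage, SetLike.mem_coe, LinearPMap.mem_graph_iff]
    constructor
    · rintro ⟨y, hy1, hy2⟩
      refine ⟨⟨(y : H), y.2.1⟩, hy1, ?_⟩
      have : (f + (g : H →ₗ[ℝ] H).toPMap ⊤) y
          = f ⟨(y : H), y.2.1⟩ + g (y : H) := by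
        rw [LinearPMap.add_apply]
        congr 1
      rw [this] at hy2
      rw [← hy2, ← hy1]
      abel
    · rintro ⟨y, hy1, hy2⟩
      refine ⟨⟨(y : H), ⟨y.2, trivial⟩⟩, hy1, ?_⟩
      have : (f + (g : H →ₗ[ℝ] H).toPMap ⊤) ⟨(y : H), ⟨y.2, trivial⟩⟩
          = f ⟨(y : H), y.2⟩ + g (y : H) := by
        rw [LinearPMap.add_apply]
        congr 1
      rw [this]
      have hy2' : f ⟨(y : H), y.2⟩ = p.2 - g p.1 := by
        have : f y = f ⟨(y : H), y.2⟩ := rfl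
        rw [← this, hy2]
      rw [hy2', hy1]
      abel
  rw [LinearPMap.IsClosed, hset]
  exact hf.preimage (continuous_fst.prodMk (continuous_snd.sub (g.continuous.comp continuous_fst)))

section Res

variable {C : H →ₗ.[ℝ] H} {η : ℝ} {Rη : H →L[ℝ] H}

omit [CompleteSpace H]

theorem res_mem (hres : IsResolvent C η Rη) (y : H) : Rη y ∈ C.domain :=
  (hres.2 y).1

/-- `C (Rη y) = η⁻¹ • (y - Rη y)` -/
theorem res_C_apply (hres : IsResolvent C η Rη) (hη : 0 < η) (y : H)
    (h : Rη y ∈ C.domain) : C ⟨Rη y, h⟩ = η⁻¹ • (y - Rη y) := by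
  obtain ⟨h', hh⟩ := hres.2 y
  have : C ⟨Rη y, h⟩ = C ⟨Rη y, h'⟩ := rfl
  rw [this, eq_inv_smul_iff₀ (ne_of_gt hη)]
  exact eq_sub_of_add_eq' hh

/-- `Rη (C x) = η⁻¹ • (x - Rη x)` for `x ∈ dom C`. -/
theorem res_apply_C (hres : IsResolvent C η Rη) (hη : 0 < η) (x : C.domain) :
    Rη (C x) = η⁻¹ • ((x : H) - Rη x) := by
  have h := hres.1 x
  rw [map_add, map_smul] at h
  rw [eq_inv_smul_iff₀ (ne_of_gt hη)]
  exact eq_sub_of_add_eq' h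

/-- the commutation relation `Rη α = α Rη + η Rη T Rη`. -/
theorem res_comm (hres : IsResolvent C η Rη) (hη : 0 < η) (α : H →L[ℝ] H) (hα : ∀ x ∈ C.domain, α x ∈ C.domain)
    (T : H →L[ℝ] H) (hT : ∀ x : C.domain, T (x : H) = α (C x) - C ⟨α x, hα x x.2⟩)
    (y : H) :
    Rη (α y) = α (Rη y) + η • Rη (T (Rη y)) := by
  have hmem := res_mem hres y
  have hy : y = Rη y + η • C ⟨Rη y, hmem⟩ := by
    rw [res_C_apply hres hη y hmem, smul_smul, mul_inv_cancel₀ (ne_of_gt hη), one_smul]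
    abel
  have hTz := hT ⟨Rη y, hmem⟩
  have hαy : α y = (α (Rη y) + η • C ⟨α (Rη y), hα _ hmem⟩) + η • T (Rη y) := by
    conv_lhs => rw [hy]
    rw [map_add, map_smul]
    have : α (C ⟨Rη y, hmem⟩) = T (Rη y) + C ⟨α (Rη y), hα _ hmem⟩ := by
      rw [hTz]; abel
    rw [this, smul_add]
    abel
  rw [hαy, map_add, hres.1 ⟨α (Rη y), hα _ hmem⟩, map_smul]

end Res

section ResAdj

variable [CompleteSpace H] {C : H →ₗ.[ℝ] H} {η : ℝ} {Rη : H →L[ℝ] H}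

theorem res_adjoint_mem (hres : IsResolvent C η Rη) (hη : 0 < η) (v : H) :
    ContinuousLinearMap.adjoint Rη v ∈ C.adjoint.domain := by
  apply LinearPMap.mem_adjoint_domain_of_exists
  refine ⟨η⁻¹ • (v - ContinuousLinearMap.adjoint Rη v), fun x => ?_⟩
  rw [real_inner_smul_left, inner_sub_left, ContinuousLinearMap.adjoint_inner_left,
    ContinuousLinearMap.adjoint_inner_left, res_apply_C hres hη x,
    real_inner_smul_right, inner_sub_right]

theorem res_adjoint_C_apply (hres : IsResolvent C η Rη) (hη : 0 < η)
    (hdense : Dense (C.domain : Set H)) (v : H)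
    (h : ContinuousLinearMap.adjoint Rη v ∈ C.adjoint.domain) :
    C.adjoint ⟨ContinuousLinearMap.adjoint Rη v, h⟩
      = η⁻¹ • (v - ContinuousLinearMap.adjoint Rη v) := by
  apply LinearPMap.adjoint_apply_eq hdense
  intro x
  rw [real_inner_smul_left, inner_sub_left, ContinuousLinearMap.adjoint_inner_left,
    ContinuousLinearMap.adjoint_inner_left, res_apply_C hres hη x,
    real_inner_smul_right, inner_sub_right]

/-- `Rη† (u + η C† u) = u` for `u ∈ dom C†`. -/
theorem res_adjoint_resolvent (hres : IsResolvent C η Rη) (hη : 0 < η)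
    (hdense : Dense (C.domain : Set H)) (u : C.adjoint.domain) :
    ContinuousLinearMap.adjoint Rη ((u : H) + η • C.adjoint u) = u := by
  refine hdense.eq_of_inner_left ℝ fun x' hx' => ?_
  obtain ⟨x, rfl⟩ : ∃ x : C.domain, (x : H) = x' := ⟨⟨x', hx'⟩, rfl⟩
  obtain ⟨hm, -⟩ := hres.2 (x : H)
  rw [ContinuousLinearMap.adjoint_inner_left, inner_add_left, real_inner_smul_left]
  have hC := (LinearPMap.adjoint_isFormalAdjoint hdense) u ⟨Rη (x : H), hm⟩
  rw [hC, res_C_apply hres hη (x : H) hm, real_inner_smul_right, inner_sub_right]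
  have hne : (η : ℝ) ≠ 0 := ne_of_gt hη
  field_simp
  abel

/-- strong convergence of the adjoint resolvents to the identity -/
theorem res_adjoint_tendsto {C : H →ₗ.[ℝ] H} (hdense : Dense (C.domain : Set H))
    (hdense' : Dense (C.adjoint.domain : Set H))
    {ηs : ℕ → ℝ} {Rs : ℕ → H →L[ℝ] H} {M : ℝ}
    (hpos : ∀ n, 0 < ηs n) (hres : ∀ n, IsResolvent C (ηs n) (Rs n))
    (hM : ∀ n, ‖Rs n‖ ≤ M) (h0 : Tendsto ηs atTop (𝓝 0)) (u : H) :
    Tendsto (fun n => ContinuousLinearMap.adjoint (Rs n) u) atTop (𝓝 u) := by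
  have hMadj : ∀ n, ‖ContinuousLinearMap.adjoint (Rs n)‖ ≤ M := fun n => by
    rw [LinearIsometryEquiv.norm_map ContinuousLinearMap.adjoint (Rs n)]; exact hM n
  have hM0 : 0 ≤ M := le_trans (norm_nonneg _) (hM 0)
  rw [Metric.tendsto_atTop]
  intro ε hε
  have hδ : 0 < ε / (2 * (M + 1)) := by positivity
  obtain ⟨u', hu'mem, hu'⟩ : ∃ u' ∈ (C.adjoint.domain : Set H), dist u u' < ε / (2 * (M + 1)) := by
    have := Metric.mem_closure_iff.mp (hdense'.closure_eq ▸ Set.mem_univ u) _ hδ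
    simpa using this
  set K := ‖C.adjoint ⟨u', hu'mem⟩‖ with hK
  have hev : ∀ᶠ n in atTop, ηs n * (M * K) < ε / 2 := by
    have : Tendsto (fun n => ηs n * (M * K)) atTop (𝓝 0) := by
      simpa using h0.mul_const (M * K)
    exact this.eventually_lt_const (by positivity)
  rw [eventually_atTop] at hev
  obtain ⟨N, hN⟩ := hev
  refine ⟨N, fun n hn => ?_⟩
  have key : ‖ContinuousLinearMap.adjoint (Rs n) u' - u'‖ ≤ ηs n * (M * K) := by
    have h4 := res_adjoint_resolvent (hres n) (hpos n) hdense ⟨u', hu'mem⟩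
    rw [map_add, map_smul] at h4
    have h4' : ContinuousLinearMap.adjoint (Rs n) u'
        + ηs n • ContinuousLinearMap.adjoint (Rs n) (C.adjoint ⟨u', hu'mem⟩) = u' := h4
    have : ContinuousLinearMap.adjoint (Rs n) u' - u'
        = -(ηs n • ContinuousLinearMap.adjoint (Rs n) (C.adjoint ⟨u', hu'mem⟩)) := by
      rw [eq_sub_of_add_eq h4']
      abel
    rw [this, norm_neg, norm_smul, Real.norm_eq_abs, abs_of_pos (hpos n)]
    have : ‖ContinuousLinearMap.adjoint (Rs n) (C.adjoint ⟨u', hu'mem⟩)‖ ≤ M * K :=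
      le_trans ((ContinuousLinearMap.adjoint (Rs n)).le_opNorm _)
        (mul_le_mul_of_nonneg_right (hMadj n) (norm_nonneg _))
    exact mul_le_mul_of_nonneg_left this (le_of_lt (hpos n))
  have tri : dist (ContinuousLinearMap.adjoint (Rs n) u) u
      ≤ M * dist u u' + (ηs n * (M * K)) + dist u u' := by
    rw [dist_eq_norm, dist_eq_norm]
    have : ContinuousLinearMap.adjoint (Rs n) u - u
        = ContinuousLinearMap.adjoint (Rs n) (u - u')
          + (ContinuousLinearMap.adjoint (Rs n) u' - u') + (u' - u) := by
      rw [map_sub]; abel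
    rw [this]
    refine le_trans (norm_add₃_le) ?_
    gcongr
    · exact le_trans ((ContinuousLinearMap.adjoint (Rs n)).le_opNorm _)
        (mul_le_mul_of_nonneg_right (hMadj n) (norm_nonneg _))
    · rw [norm_sub_rev]
  have : M * dist u u' + ηs n * (M * K) + dist u u' < ε := by
    have h1 : (M + 1) * dist u u' < (M + 1) * (ε / (2 * (M + 1))) := by
      apply mul_lt_mul_of_pos_left hu' (by positivity)
    have h2 : (M + 1) * (ε / (2 * (M + 1))) = ε / 2 := by field_simp
    have := hN n hn
    nlinarith [dist_nonneg (x := u) (y := u')]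
  linarith

/-- strong convergence with moving argument -/
theorem res_adjoint_tendsto' {C : H →ₗ.[ℝ] H} (hdense : Dense (C.domain : Set H))
    (hdense' : Dense (C.adjoint.domain : Set H))
    {ηs : ℕ → ℝ} {Rs : ℕ → H →L[ℝ] H} {M : ℝ}
    (hpos : ∀ n, 0 < ηs n) (hres : ∀ n, IsResolvent C (ηs n) (Rs n))
    (hM : ∀ n, ‖Rs n‖ ≤ M) (h0 : Tendsto ηs atTop (𝓝 0))
    {zs : ℕ → H} {z : H} (hz : Tendsto zs atTop (𝓝 z)) :
    Tendsto (fun n => ContinuousLinearMap.adjoint (Rs n) (zs n)) atTop (𝓝 z) := by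
  have hMadj : ∀ n, ‖ContinuousLinearMap.adjoint (Rs n)‖ ≤ M := fun n => by
    rw [LinearIsometryEquiv.norm_map ContinuousLinearMap.adjoint (Rs n)]; exact hM n
  rw [tendsto_iff_norm_sub_tendsto_zero]
  apply squeeze_zero (fun n => norm_nonneg _)
    (g := fun n => M * ‖zs n - z‖ + ‖ContinuousLinearMap.adjoint (Rs n) z - z‖)
  · intro n
    have : ContinuousLinearMap.adjoint (Rs n) (zs n) - z
        = ContinuousLinearMap.adjoint (Rs n) (zs n - z)
          + (ContinuousLinearMap.adjoint (Rs n) z - z) := by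
      rw [map_sub]; abel
    rw [this]
    refine le_trans (norm_add_le _ _) ?_
    gcongr
    exact le_trans ((ContinuousLinearMap.adjoint (Rs n)).le_opNorm _)
      (mul_le_mul_of_nonneg_right (hMadj n) (norm_nonneg _))
  · have h1 : Tendsto (fun n => M * ‖zs n - z‖) atTop (𝓝 0) := by
      have := (tendsto_iff_norm_sub_tendsto_zero.mp hz).const_mul M
      simpa using this
    have h2 : Tendsto
        (fun n => ‖ContinuousLinearMap.adjoint (Rs n) z - z‖) atTop (𝓝 0) :=
      tendsto_iff_norm_sub_tendsto_zero.mp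
        (res_adjoint_tendsto hdense hdense' hpos hres hM h0 z)
    simpa using h1.add h2

end ResAdj

end Aux

section Key

open RealInnerProductSpace

variable [CompleteSpace H]

/-- The commutator adjoint: `T' = T†` pointwise. -/
theorem Tadj_eq {C : H →ₗ.[ℝ] H} (hdense : Dense (C.domain : Set H))
    (hdense' : Dense (C.adjoint.domain : Set H))
    (α : H →L[ℝ] H) (hα : ∀ x ∈ C.domain, α x ∈ C.domain)
    (T : H →L[ℝ] H)
    (hT : ∀ x : C.domain, T (x : H) = α (C x) - C ⟨α x, hα x x.2⟩)
    (T' : H →L[ℝ] H)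
    (hT' : ∀ v : C.adjoint.domain,
      ∃ h : ContinuousLinearMap.adjoint α (v : H) ∈ C.adjoint.domain,
        T' (v : H) = C.adjoint ⟨ContinuousLinearMap.adjoint α (v : H), h⟩ -
          ContinuousLinearMap.adjoint α (C.adjoint v)) (z : H) :
    T' z = ContinuousLinearMap.adjoint T z := by
  have heq : (T' : H → H) = (ContinuousLinearMap.adjoint T : H → H) := by
    refine Continuous.ext_on hdense' T'.continuous (ContinuousLinearMap.adjoint T).continuous ?_
    intro v hv
    obtain ⟨hm, heqT⟩ := hT' ⟨v, hv⟩
    refine hdense.eq_of_inner_left ℝ fun x' hx' => ?_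
    obtain ⟨x, rfl⟩ : ∃ x : C.domain, (x : H) = x' := ⟨⟨x', hx'⟩, rfl⟩
    have h1 : ⟪T' v, (x : H)⟫ = ⟪C.adjoint ⟨ContinuousLinearMap.adjoint α v, hm⟩, (x : H)⟫
        - ⟪C.adjoint ⟨v, hv⟩, α x⟫ := by
      rw [heqT, inner_sub_left, ContinuousLinearMap.adjoint_inner_left]
    have h2 := (LinearPMap.adjoint_isFormalAdjoint hdense) ⟨ContinuousLinearMap.adjoint α v, hm⟩ x
    have h3 := (LinearPMap.adjoint_isFormalAdjoint hdense) ⟨v, hv⟩ ⟨α x, hα x x.2⟩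
    rw [h1, h2, h3, ContinuousLinearMap.adjoint_inner_left]
    rw [ContinuousLinearMap.adjoint_inner_left]
    have h4 : (↑(⟨v, hv⟩ : C.adjoint.domain) : H) = v := rfl
    rw [h4, ← inner_sub_right]
    congr 1
    rw [hT x]
  exact congrFun heq z

/-- KEY identity: `α† C† Rη† v = Rη† (A† v) - Rη† T† Rη† v` for `v ∈ dom (αC)†`. -/
theorem key_identity {C : H →ₗ.[ℝ] H} (hdense : Dense (C.domain : Set H))
    {η : ℝ} {Rη : H →L[ℝ] H} (hres : IsResolvent C η Rη) (hη : 0 < η)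
    (α : H →L[ℝ] H) (hα : ∀ x ∈ C.domain, α x ∈ C.domain)
    (T : H →L[ℝ] H)
    (hT : ∀ x : C.domain, T (x : H) = α (C x) - C ⟨α x, hα x x.2⟩)
    (v : (lcompPMap α C).adjoint.domain) :
    ContinuousLinearMap.adjoint α
      (C.adjoint ⟨ContinuousLinearMap.adjoint Rη (v : H), res_adjoint_mem hres hη _⟩)
      = ContinuousLinearMap.adjoint Rη ((lcompPMap α C).adjoint v)
        - ContinuousLinearMap.adjoint Rη (ContinuousLinearMap.adjoint T
            (ContinuousLinearMap.adjoint Rη (v : H))) := by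
  have hAdense : Dense ((lcompPMap α C).domain : Set H) := hdense
  refine hdense.eq_of_inner_left ℝ fun x' hx' => ?_
  obtain ⟨x, rfl⟩ : ∃ x : C.domain, (x : H) = x' := ⟨⟨x', hx'⟩, rfl⟩
  have hm : Rη (x : H) ∈ C.domain := res_mem hres (x : H)
  -- the algebraic key
  have hkey : Rη (C ⟨α x, hα x x.2⟩) = α (C ⟨Rη (x : H), hm⟩) - Rη (T (Rη (x : H))) := by
    rw [res_apply_C hres hη ⟨α (x : H), hα x x.2⟩]
    rw [res_C_apply hres hη (x : H) hm]
    rw [res_comm hres hη α hα T hT (x : H)]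
    rw [map_smul, map_sub]
    match_scalars <;> field_simp
  -- LHS chain
  have s1 : ⟪ContinuousLinearMap.adjoint α
      (C.adjoint ⟨ContinuousLinearMap.adjoint Rη (v : H), res_adjoint_mem hres hη _⟩), (x : H)⟫
      = ⟪(v : H), Rη (C ⟨α x, hα x x.2⟩)⟫ := by
    rw [ContinuousLinearMap.adjoint_inner_left]
    have := (LinearPMap.adjoint_isFormalAdjoint hdense)
      ⟨ContinuousLinearMap.adjoint Rη (v : H), res_adjoint_mem hres hη _⟩ ⟨α x, hα x x.2⟩
    rw [this, ContinuousLinearMap.adjoint_inner_left]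
  have s2 : ⟪(v : H), α (C ⟨Rη (x : H), hm⟩)⟫
      = ⟪ContinuousLinearMap.adjoint Rη ((lcompPMap α C).adjoint v), (x : H)⟫ := by
    have hAform := (LinearPMap.adjoint_isFormalAdjoint hAdense) v ⟨Rη (x : H), hm⟩
    have hAval : (lcompPMap α C) ⟨Rη (x : H), hm⟩ = α (C ⟨Rη (x : H), hm⟩) := rfl
    rw [ContinuousLinearMap.adjoint_inner_left, hAform, hAval]
  have s3 : ⟪(v : H), Rη (T (Rη (x : H)))⟫
      = ⟪ContinuousLinearMap.adjoint Rη (ContinuousLinearMap.adjoint T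
          (ContinuousLinearMap.adjoint Rη (v : H))), (x : H)⟫ := by
    rw [ContinuousLinearMap.adjoint_inner_left, ContinuousLinearMap.adjoint_inner_left,
      ContinuousLinearMap.adjoint_inner_left]
  rw [s1, hkey, inner_sub_right, s2, s3, inner_sub_left]

end Key

open RealInnerProductSpace in
set_option maxHeartbeats 1000000 in
/-- for quasi-m-accretive `C` and bounded `α` leaving `dom C` invariant with
continuous commutator `[α,C]`, one has `(αC)* = cl(α*C*) + cl([C*,α*])`; here `T'` is the
continuous extension of the commutator `[C*,α*] = C*α* - α*C*` defined on `dom C*`. -/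
theorem adjoint_alphaC_eq [CompleteSpace H]
    (C : H →ₗ.[ℝ] H) (hdense : Dense (C.domain : Set H)) (hclosed : C.IsClosed)
    (hdense' : Dense (C.adjoint.domain : Set H))
    (Res : ℝ → H →L[ℝ] H) (η₀ M : ℝ)
    (hq : IsQuasiMAccretiveWith C Res η₀ M)
    (α : H →L[ℝ] H) (hα : ∀ x ∈ C.domain, α x ∈ C.domain)
    (T : H →L[ℝ] H)
    (hT : ∀ x : C.domain, T (x : H) = α (C x) - C ⟨α x, hα x x.2⟩)
    (T' : H →L[ℝ] H)
    (hT' : ∀ v : C.adjoint.domain,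
      ∃ h : ContinuousLinearMap.adjoint α (v : H) ∈ C.adjoint.domain,
        T' (v : H) = C.adjoint ⟨ContinuousLinearMap.adjoint α (v : H), h⟩ -
          ContinuousLinearMap.adjoint α (C.adjoint v)) :
    (lcompPMap α C).adjoint =
      (lcompPMap (ContinuousLinearMap.adjoint α) C.adjoint).closure +
        (T' : H →ₗ[ℝ] H).toPMap ⊤ := by
  obtain ⟨hη₀, hresall⟩ := hq
  have hAdense : Dense ((lcompPMap α C).domain : Set H) := hdense
  -- A† is closed
  have hA'closed : (lcompPMap α C).adjoint.IsClosed := adjoint_isClosed' _ hAdense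
  -- W := B + T' is a formal adjoint of A, so W ≤ A†
  have hFormal : (lcompPMap α C).IsFormalAdjoint
      (lcompPMap (ContinuousLinearMap.adjoint α) C.adjoint + (T' : H →ₗ[ℝ] H).toPMap ⊤) := by
    intro x w
    have hw1 : (w : H) ∈ C.adjoint.domain := w.2.1
    obtain ⟨hm, heqT⟩ := hT' ⟨(w : H), hw1⟩
    have heqT' : T' (w : H) = C.adjoint ⟨ContinuousLinearMap.adjoint α (w : H), hm⟩
        - ContinuousLinearMap.adjoint α (C.adjoint ⟨(w : H), hw1⟩) := heqT
    have hCval : C.adjoint ⟨ContinuousLinearMap.adjoint α (w : H), hm⟩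
        = ContinuousLinearMap.adjoint α (C.adjoint ⟨(w : H), hw1⟩) + T' (w : H) := by
      rw [heqT']; abel
    have hWval : (lcompPMap (ContinuousLinearMap.adjoint α) C.adjoint
          + (T' : H →ₗ[ℝ] H).toPMap ⊤) w
        = ContinuousLinearMap.adjoint α (C.adjoint ⟨(w : H), hw1⟩) + T' (w : H) := rfl
    have hFA := (LinearPMap.adjoint_isFormalAdjoint hdense)
      ⟨ContinuousLinearMap.adjoint α (w : H), hm⟩ ⟨(x : H), x.2⟩
    have hFA' : ⟪(C.adjoint ⟨ContinuousLinearMap.adjoint α (w : H), hm⟩ : H), (x : H)⟫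
        = ⟪ContinuousLinearMap.adjoint α (w : H), (C ⟨(x : H), x.2⟩ : H)⟫ := hFA
    have hAx : (lcompPMap α C) x = α (C ⟨(x : H), x.2⟩) := rfl
    rw [hWval, hAx, ← hCval]
    calc ⟪(α (C ⟨(x : H), x.2⟩) : H), (w : H)⟫
        = ⟪(C ⟨(x : H), x.2⟩ : H), ContinuousLinearMap.adjoint α (w : H)⟫ :=
          (ContinuousLinearMap.adjoint_inner_right _ _ _).symm
      _ = ⟪ContinuousLinearMap.adjoint α (w : H), (C ⟨(x : H), x.2⟩ : H)⟫ :=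
          real_inner_comm _ _
      _ = ⟪(C.adjoint ⟨ContinuousLinearMap.adjoint α (w : H), hm⟩ : H), (x : H)⟫ := hFA'.symm
      _ = ⟪(x : H), (C.adjoint ⟨ContinuousLinearMap.adjoint α (w : H), hm⟩ : H)⟫ :=
          real_inner_comm _ _
  have hW_le : (lcompPMap (ContinuousLinearMap.adjoint α) C.adjoint
      + (T' : H →ₗ[ℝ] H).toPMap ⊤) ≤ (lcompPMap α C).adjoint :=
    hFormal.le_adjoint hAdense
  -- B is closable
  have hUclosed := isClosed_add_toPMap _ hA'closed (-T')
  have hBU : lcompPMap (ContinuousLinearMap.adjoint α) C.adjoint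
      ≤ (lcompPMap α C).adjoint + ((-T' : H →L[ℝ] H) : H →ₗ[ℝ] H).toPMap ⊤ := by
    constructor
    · intro z hz
      exact Submodule.mem_inf.mpr
        ⟨hW_le.1 (Submodule.mem_inf.mpr ⟨hz, Submodule.mem_top⟩), Submodule.mem_top⟩
    · intro x y hxy
      have hyA : (y : H) ∈ (lcompPMap α C).adjoint.domain := y.2.1
      have hxW : (x : H) ∈ (lcompPMap (ContinuousLinearMap.adjoint α) C.adjoint
          + (T' : H →ₗ[ℝ] H).toPMap ⊤).domain := Submodule.mem_inf.mpr ⟨x.2, Submodule.mem_top⟩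
      have hUy : ((lcompPMap α C).adjoint + ((-T' : H →L[ℝ] H) : H →ₗ[ℝ] H).toPMap ⊤) y
          = (lcompPMap α C).adjoint ⟨(y : H), hyA⟩ + (-T') (y : H) := rfl
      have hWx : (lcompPMap (ContinuousLinearMap.adjoint α) C.adjoint
            + (T' : H →ₗ[ℝ] H).toPMap ⊤) ⟨(x : H), hxW⟩
          = lcompPMap (ContinuousLinearMap.adjoint α) C.adjoint x + T' (x : H) := rfl
      have hAW : (lcompPMap (ContinuousLinearMap.adjoint α) C.adjoint
            + (T' : H →ₗ[ℝ] H).toPMap ⊤) ⟨(x : H), hxW⟩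
          = (lcompPMap α C).adjoint ⟨(y : H), hyA⟩ := hW_le.2 (by exact hxy)
      rw [hUy, ← hAW, hWx, hxy]
      simp only [ContinuousLinearMap.neg_apply]
      abel
  have hBclosable : (lcompPMap (ContinuousLinearMap.adjoint α) C.adjoint).IsClosable :=
    hUclosed.isClosable.leIsClosable hBU
  -- direction (a): closure B + T' ≤ A†
  have himg : ∀ z (hz : z ∈ (lcompPMap (ContinuousLinearMap.adjoint α) C.adjoint).closure.domain),
      (z, (lcompPMap (ContinuousLinearMap.adjoint α) C.adjoint).closure ⟨z, hz⟩ + T' z)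
        ∈ (lcompPMap α C).adjoint.graph := by
    intro z hz
    have hmemcl : (z, (lcompPMap (ContinuousLinearMap.adjoint α) C.adjoint).closure ⟨z, hz⟩)
        ∈ closure ((lcompPMap (ContinuousLinearMap.adjoint α) C.adjoint).graph : Set (H × H)) := by
      rw [← Submodule.topologicalClosure_coe, hBclosable.graph_closure_eq_closure_graph]
      exact (lcompPMap (ContinuousLinearMap.adjoint α) C.adjoint).closure.mem_graph ⟨z, hz⟩
    have hψ : Continuous fun p : H × H => (p.1, p.2 + T' p.1) :=
      continuous_fst.prodMk (continuous_snd.add (T'.continuous.comp continuous_fst))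
    have hsub : (fun p : H × H => (p.1, p.2 + T' p.1)) ''
        ((lcompPMap (ContinuousLinearMap.adjoint α) C.adjoint).graph : Set (H × H))
        ⊆ ((lcompPMap α C).adjoint.graph : Set (H × H)) := by
      rintro p ⟨q, hq, rfl⟩
      rw [SetLike.mem_coe, LinearPMap.mem_graph_iff] at hq
      obtain ⟨u, hu1, hu2⟩ := hq
      have hWmem : (u : H) ∈ (lcompPMap (ContinuousLinearMap.adjoint α) C.adjoint
          + (T' : H →ₗ[ℝ] H).toPMap ⊤).domain := Submodule.mem_inf.mpr ⟨u.2, Submodule.mem_top⟩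
      have hWg := LinearPMap.le_graph_of_le hW_le
        ((lcompPMap (ContinuousLinearMap.adjoint α) C.adjoint
          + (T' : H →ₗ[ℝ] H).toPMap ⊤).mem_graph ⟨(u : H), hWmem⟩)
      have hWu : (lcompPMap (ContinuousLinearMap.adjoint α) C.adjoint
            + (T' : H →ₗ[ℝ] H).toPMap ⊤) ⟨(u : H), hWmem⟩
          = lcompPMap (ContinuousLinearMap.adjoint α) C.adjoint u + T' (u : H) := rfl
      rw [hWu] at hWg
      simp only [SetLike.mem_coe]
      rw [← hu1, ← hu2]
      exact hWg
    have hkey := image_closure_subset_closure_image hψ (Set.mem_image_of_mem _ hmemcl)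
    have := closure_mono hsub hkey
    rwa [IsClosed.closure_eq hA'closed] at this
  -- direction (b) key: sequences
  set ηs : ℕ → ℝ := fun n => η₀ / (n + 1) with hηs
  have hpos : ∀ n, 0 < ηs n := fun n => by positivity
  have hIcc : ∀ n, ηs n ∈ Set.Icc (0 : ℝ) η₀ := fun n => by
    refine ⟨(hpos n).le, ?_⟩
    rw [hηs]
    apply div_le_self hη₀.le
    have : (0 : ℝ) ≤ (n : ℝ) := Nat.cast_nonneg n
    linarith
  have hresn : ∀ n, IsResolvent C (ηs n) (Res (ηs n)) := fun n => (hresall _ (hIcc n)).1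
  have hMn : ∀ n, ‖Res (ηs n)‖ ≤ M := fun n => (hresall _ (hIcc n)).2
  have h0 : Tendsto ηs atTop (𝓝 0) := by
    have h := tendsto_one_div_add_atTop_nhds_zero_nat.const_mul η₀
    rw [mul_zero] at h
    refine h.congr fun n => ?_
    rw [hηs, mul_one_div]
  have hkeyv : ∀ v : (lcompPMap α C).adjoint.domain,
      ((v : H), (lcompPMap α C).adjoint v - T' (v : H))
        ∈ (lcompPMap (ContinuousLinearMap.adjoint α) C.adjoint).closure.graph := by
    intro v
    rw [← hBclosable.graph_closure_eq_closure_graph, ← SetLike.mem_coe,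
      Submodule.topologicalClosure_coe]
    apply mem_closure_of_tendsto (b := atTop) (f := fun n =>
      ((ContinuousLinearMap.adjoint (Res (ηs n)) (v : H) : H),
        ContinuousLinearMap.adjoint α (C.adjoint
          ⟨ContinuousLinearMap.adjoint (Res (ηs n)) (v : H),
            res_adjoint_mem (hresn n) (hpos n) _⟩)))
    · apply Tendsto.prodMk_nhds
      · exact res_adjoint_tendsto hdense hdense' hpos hresn hMn h0 (v : H)
      · have hrw : ∀ n, ContinuousLinearMap.adjoint α (C.adjoint
            ⟨ContinuousLinearMap.adjoint (Res (ηs n)) (v : H),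
              res_adjoint_mem (hresn n) (hpos n) _⟩)
            = ContinuousLinearMap.adjoint (Res (ηs n)) ((lcompPMap α C).adjoint v)
              - ContinuousLinearMap.adjoint (Res (ηs n)) (ContinuousLinearMap.adjoint T
                  (ContinuousLinearMap.adjoint (Res (ηs n)) (v : H))) :=
          fun n => key_identity hdense (hresn n) (hpos n) α hα T hT v
        have t1 : Tendsto (fun n => ContinuousLinearMap.adjoint (Res (ηs n))
            ((lcompPMap α C).adjoint v)) atTop (𝓝 ((lcompPMap α C).adjoint v)) :=
          res_adjoint_tendsto hdense hdense' hpos hresn hMn h0 _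
        have t0 : Tendsto (fun n => ContinuousLinearMap.adjoint T
            (ContinuousLinearMap.adjoint (Res (ηs n)) (v : H))) atTop
            (𝓝 (ContinuousLinearMap.adjoint T (v : H))) :=
          ((ContinuousLinearMap.adjoint T).continuous.tendsto _).comp
            (res_adjoint_tendsto hdense hdense' hpos hresn hMn h0 (v : H))
        have t2 : Tendsto (fun n => ContinuousLinearMap.adjoint (Res (ηs n))
            (ContinuousLinearMap.adjoint T
              (ContinuousLinearMap.adjoint (Res (ηs n)) (v : H)))) atTop
            (𝓝 (ContinuousLinearMap.adjoint T (v : H))) :=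
          res_adjoint_tendsto' hdense hdense' hpos hresn hMn h0 t0
        have hlim := t1.sub t2
        have hTT := Tadj_eq hdense hdense' α hα T hT T' hT' (v : H)
        rw [← hTT] at hlim
        exact Tendsto.congr (fun n => (hrw n).symm) hlim
    · refine Filter.Eventually.of_forall fun n => ?_
      exact (lcompPMap (ContinuousLinearMap.adjoint α) C.adjoint).mem_graph
        ⟨ContinuousLinearMap.adjoint (Res (ηs n)) (v : H),
          res_adjoint_mem (hresn n) (hpos n) _⟩
  -- assemble
  apply le_antisymm
  · -- A† ≤ closure B + T'
    constructor
    · intro z hz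
      exact Submodule.mem_inf.mpr
        ⟨LinearPMap.mem_domain_of_mem_graph (hkeyv ⟨z, hz⟩), Submodule.mem_top⟩
    · intro x y hxy
      have hy1 : (y : H) ∈ (lcompPMap (ContinuousLinearMap.adjoint α) C.adjoint).closure.domain :=
        y.2.1
      have hx1 : (x : H) ∈ (lcompPMap (ContinuousLinearMap.adjoint α) C.adjoint).closure.domain :=
        LinearPMap.mem_domain_of_mem_graph (hkeyv x)
      have hBval : (lcompPMap (ContinuousLinearMap.adjoint α) C.adjoint).closure ⟨(x : H), hx1⟩
          = (lcompPMap α C).adjoint x - T' (x : H) :=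
        ((LinearPMap.image_iff hx1).mpr (hkeyv x)).symm
      have hRHS : ((lcompPMap (ContinuousLinearMap.adjoint α) C.adjoint).closure
            + (T' : H →ₗ[ℝ] H).toPMap ⊤) y
          = (lcompPMap (ContinuousLinearMap.adjoint α) C.adjoint).closure ⟨(y : H), hy1⟩
            + T' (y : H) := rfl
      have hsub : (⟨(y : H), hy1⟩ :
            (lcompPMap (ContinuousLinearMap.adjoint α) C.adjoint).closure.domain)
          = ⟨(x : H), hx1⟩ := Subtype.ext hxy.symm
      rw [hRHS, hsub, hBval, ← hxy]
      abel
  · -- closure B + T' ≤ A†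
    constructor
    · intro z hz
      have hz1 : z ∈ (lcompPMap (ContinuousLinearMap.adjoint α) C.adjoint).closure.domain :=
        (Submodule.mem_inf.mp hz).1
      exact LinearPMap.mem_domain_of_mem_graph (himg z hz1)
    · intro x y hxy
      have hx1 : (x : H) ∈ (lcompPMap (ContinuousLinearMap.adjoint α) C.adjoint).closure.domain :=
        x.2.1
      have hgr := himg (x : H) hx1
      have hyA : (x : H) ∈ (lcompPMap α C).adjoint.domain :=
        LinearPMap.mem_domain_of_mem_graph hgr
      have hAval : (lcompPMap α C).adjoint ⟨(x : H), hyA⟩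
          = (lcompPMap (ContinuousLinearMap.adjoint α) C.adjoint).closure ⟨(x : H), hx1⟩
            + T' (x : H) := ((LinearPMap.image_iff hyA).mpr hgr).symm
      have hxRHS : ((lcompPMap (ContinuousLinearMap.adjoint α) C.adjoint).closure
            + (T' : H →ₗ[ℝ] H).toPMap ⊤) x
          = (lcompPMap (ContinuousLinearMap.adjoint α) C.adjoint).closure ⟨(x : H), hx1⟩
            + T' (x : H) := rfl
      have hyx : y = ⟨(x : H), hyA⟩ := Subtype.ext hxy.symm
      rw [hxRHS, hyx, hAval]
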